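/- Let h ∈ Diff_1(C,0) be a germ of holomorphic diffeomorphism of (C,0) tangent to the identity and not equal to the identity, say h(z) = z + a z^{k+1} + O(z^{k+2}) with a ≠ 0, k ≥ 1. Then there exists a point z_0 arbitrarily close to 0 whose forward orbit h^n(z_0) converges to 0 and consists of pairwise distinct points; in particular h has infinite orbits in every neighborhood of 0 (Leau–Fatou flower theorem, orbit-attraction part). -/

import Mathlib

open Function Filter

noncomputable def lfF (k : ℕ) (a : ℂ) (z : ℂ) : ℂ := -1 / ((k:ℂ) * a * z ^ k)

noncomputable def lfPhi (k : ℕ) (a : ℂ) (g : ℂ → ℂ) (z : ℂ) : ℂ :=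
  g z * (∑ i ∈ Finset.range k, (1 + z ^ k * g z) ^ i) / ((k:ℂ) * a * (1 + z ^ k * g z) ^ k)

lemma lf_key (k : ℕ) (hk : 1 ≤ k) (a : ℂ) (ha : a ≠ 0) (g : ℂ → ℂ)
    (z : ℂ) (hz : z ≠ 0) (hv : (1 : ℂ) + z ^ k * g z ≠ 0) :
    lfF k a (z * (1 + z ^ k * g z)) = lfF k a z + lfPhi k a g z := by
  set w := g z with hw
  unfold lfF lfPhi
  simp only [← hw]
  have hS := geom_sum_mul (1 + z ^ k * w) k
  have hk0 : (k:ℂ) ≠ 0 := Nat.cast_ne_zero.mpr (by omega)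
  rw [mul_pow]
  field_simp
  linear_combination (-1 : ℂ) * hS

lemma lf_size (k : ℕ) (hk : 1 ≤ k) (a : ℂ) (ha : a ≠ 0) (ζ : ℝ) (hζ : 0 < ζ) (z : ℂ)
    (hre : 1 / ((k:ℝ) * ‖a‖ * ζ ^ k) < (lfF k a z).re) :
    z ≠ 0 ∧ ‖z‖ < ζ := by
  have hkR : (0:ℝ) < k := by exact_mod_cast Nat.pos_of_ne_zero (by omega)
  have haR : 0 < ‖a‖ := by simpa using ha
  have hB : 0 < 1 / ((k:ℝ) * ‖a‖ * ζ ^ k) := by positivity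
  have hz : z ≠ 0 := by
    rintro rfl
    rw [lfF] at hre
    rw [zero_pow (by omega : k ≠ 0)] at hre
    simp at hre
    have : (0:ℝ) < (ζ ^ k)⁻¹ * ((‖a‖)⁻¹ * (↑k)⁻¹) := by positivity
    linarith
  refine ⟨hz, ?_⟩
  have hzR : 0 < ‖z‖ := by simpa using hz
  have habs : ‖lfF k a z‖ = 1 / ((k:ℝ) * ‖a‖ * ‖z‖ ^ k) := by
    rw [lfF]
    rw [norm_div]
    simp [Complex.norm_natCast]
  have hle : (lfF k a z).re ≤ ‖lfF k a z‖ := Complex.re_le_norm _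
  rw [habs] at hle
  have hlt : 1 / ((k:ℝ) * ‖a‖ * ζ ^ k) < 1 / ((k:ℝ) * ‖a‖ * ‖z‖ ^ k) :=
    lt_of_lt_of_le hre hle
  have h1 : (0:ℝ) < (k:ℝ) * ‖a‖ * ‖z‖ ^ k := by positivity
  have h2 : (k:ℝ) * ‖a‖ * ‖z‖ ^ k < (k:ℝ) * ‖a‖ * ζ ^ k :=
    lt_of_one_div_lt_one_div (by positivity) hlt
  have h3 : ‖z‖ ^ k < ζ ^ k := by
    have := (mul_lt_mul_iff_right₀ (by positivity : (0:ℝ) < (k:ℝ) * ‖a‖)).mp h2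
    exact this
  exact lt_of_pow_lt_pow_left₀ k hζ.le h3

theorem leau_fatou_attracting_orbit
    (h : ℂ → ℂ) (hh : AnalyticAt ℂ h 0) (h0 : h 0 = 0)
    (hd : deriv h 0 = 1) (hne : ¬ ∀ᶠ z in nhds (0 : ℂ), h z = z) :
    ∀ ε > (0 : ℝ), ∃ z0 : ℂ, z0 ≠ 0 ∧ ‖z0‖ < ε ∧
      (∀ n : ℕ, ‖h^[n] z0‖ < ε) ∧
      Tendsto (fun n : ℕ => h^[n] z0) atTop (nhds 0) ∧
      Function.Injective (fun n : ℕ => h^[n] z0) := by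
  -- Extract the normal form h z = z (1 + z^k g z)
  obtain ⟨k, g, hk, hg, hg0, hev⟩ :
      ∃ (k : ℕ) (g : ℂ → ℂ), 1 ≤ k ∧ AnalyticAt ℂ g 0 ∧ g 0 ≠ 0 ∧
        ∀ᶠ z in nhds (0:ℂ), h z = z * (1 + z ^ k * g z) := by
    set f : ℂ → ℂ := fun z => h z - z with hfdef
    have hf : AnalyticAt ℂ f 0 := hh.sub analyticAt_id
    have hfne : ¬ ∀ᶠ z in nhds (0:ℂ), f z = 0 := by
      simpa [hfdef, sub_eq_zero] using hne
    have horder : analyticOrderAt f 0 ≠ ⊤ := fun ht => hfne (analyticOrderAt_eq_top.mp ht)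
    obtain ⟨m, hm⟩ := WithTop.ne_top_iff_exists.mp horder
    obtain ⟨g, hg, hg0, hfg⟩ := (hf.analyticOrderAt_eq_natCast (n := m)).mp hm.symm
    have hfg' : ∀ᶠ z in nhds (0:ℂ), f z = z ^ m * g z := by
      filter_upwards [hfg] with z hz using by simpa using hz
    have hm0 : m ≠ 0 := by
      rintro rfl
      have := hfg'.self_of_nhds
      simp [hfdef, h0] at this
      exact hg0 this.symm
    have hm1 : m ≠ 1 := by
      rintro rfl
      have hder : HasDerivAt (fun z : ℂ => z ^ 1 * g z) (g 0) 0 := by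
        have : HasDerivAt (fun z : ℂ => z * g z) (1 * g 0 + 0 * deriv g 0) 0 :=
          (hasDerivAt_id' (x := (0:ℂ))).mul hg.differentiableAt.hasDerivAt
        simpa using this
      have hdf : deriv f 0 = g 0 := by
        rw [Filter.EventuallyEq.deriv_eq hfg']
        exact hder.deriv
      have hz0 : deriv f 0 = 0 := by
        have : deriv f 0 = deriv h 0 - 1 := by
          have := deriv_sub hh.differentiableAt differentiableAt_id
          simpa [hfdef, Pi.sub_def] using this
        rw [this, hd]; ring
      exact hg0 (by rw [← hdf, hz0])
    obtain ⟨k, rfl⟩ : ∃ k, m = k + 1 := ⟨m - 1, by omega⟩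
    refine ⟨k, g, by omega, hg, hg0, ?_⟩
    filter_upwards [hfg'] with z hz
    have : h z = z + z ^ (k+1) * g z := by rw [← hz]; simp [hfdef]
    rw [this]; ring
  intro ε hε
  set a := g 0 with hadef
  have hkC : (k:ℂ) ≠ 0 := Nat.cast_ne_zero.mpr (by omega)
  have hkR : (0:ℝ) < k := by exact_mod_cast Nat.pos_of_ne_zero (by omega)
  have haR : 0 < ‖a‖ := by simpa using hg0
  set K := (k:ℝ) * ‖a‖ with hKdef
  have hKpos : 0 < K := by positivity
  -- continuity facts
  have hgc : ContinuousAt g 0 := hg.continuousAt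
  have hucont : ContinuousAt (fun z : ℂ => z ^ k * g z) 0 :=
    ((continuous_pow k).continuousAt).mul hgc
  have hu0 : (0:ℂ) ^ k * g 0 = 0 := by rw [zero_pow (by omega : k ≠ 0), zero_mul]
  have hden0 : ((k:ℂ) * a * (1 + (0:ℂ) ^ k * g 0) ^ k) ≠ 0 := by
    rw [hu0]
    simp [hkC, hg0]
  have hΦcont : ContinuousAt (lfPhi k a g) 0 := by
    unfold lfPhi
    apply ContinuousAt.div
    · exact hgc.mul
        (((continuous_finset_sum _ fun i _ => continuous_pow i).continuousAt).comp
          (continuousAt_const.add hucont))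
    · exact continuousAt_const.mul ((continuousAt_const.add hucont).pow k)
    · exact hden0
  have hΦ0 : lfPhi k a g 0 = 1 := by
    unfold lfPhi
    rw [hu0]
    simp only [add_zero, one_pow, Finset.sum_const, Finset.card_range, nsmul_eq_mul, mul_one]
    field_simp
    ring
  -- eventual properties
  have hev2 : ∀ᶠ z in nhds (0:ℂ), ‖z ^ k * g z‖ < 1 := by
    have ht : Tendsto (fun z : ℂ => z ^ k * g z) (nhds 0) (nhds 0) := by
      have := hucont.tendsto
      rwa [hu0] at this
    have hb : Metric.ball (0:ℂ) 1 ∈ nhds (0:ℂ) := Metric.ball_mem_nhds _ one_pos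
    filter_upwards [ht hb] with z hz
    simpa [Complex.dist_eq] using hz
  have hev3 : ∀ᶠ z in nhds (0:ℂ), ‖lfPhi k a g z - 1‖ < 1/2 := by
    have ht : Tendsto (lfPhi k a g) (nhds 0) (nhds 1) := by
      have := hΦcont.tendsto
      rwa [hΦ0] at this
    have hb : Metric.ball (1:ℂ) (1/2) ∈ nhds (1:ℂ) := Metric.ball_mem_nhds _ (by norm_num)
    filter_upwards [ht hb] with z hz
    simpa [Complex.dist_eq] using hz
  obtain ⟨δ0, hδ0, hδall⟩ := Metric.eventually_nhds_iff.mp ((hev.and hev2).and hev3)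
  set δ := min δ0 ε with hδdef
  have hδpos : 0 < δ := lt_min hδ0 hε
  have hδε : δ ≤ ε := min_le_right _ _
  have hδδ0 : δ ≤ δ0 := min_le_left _ _
  set R := 1 / (K * δ ^ k) with hRdef
  have hRpos : 0 < R := by positivity
  -- the step lemma
  have step : ∀ z : ℂ, R < (lfF k a z).re → (lfF k a z).re + 1/2 ≤ (lfF k a (h z)).re := by
    intro z hz
    obtain ⟨hz0, hzδ⟩ := lf_size k hk a hg0 δ hδpos z hz
    obtain ⟨⟨hhz, huz⟩, hΦz⟩ := hδall (show dist z 0 < δ0 by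
      rw [Complex.dist_eq, sub_zero]; exact lt_of_lt_of_le hzδ hδδ0)
    have hv : (1:ℂ) + z ^ k * g z ≠ 0 := by
      intro hc
      have h1 : z ^ k * g z = -1 := by linear_combination hc
      rw [h1] at huz
      simp at huz
    have hkey : lfF k a (h z) = lfF k a z + lfPhi k a g z := by
      rw [hhz]
      exact lf_key k hk a hg0 g z hz0 hv
    have hΦre : (1:ℝ)/2 ≤ (lfPhi k a g z).re := by
      have h1 : |(lfPhi k a g z - 1).re| ≤ ‖lfPhi k a g z - 1‖ :=
        Complex.abs_re_le_norm _
      have h2 : (lfPhi k a g z - 1).re = (lfPhi k a g z).re - 1 := by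
        simp [Complex.sub_re]
      rw [h2] at h1
      have := abs_le.mp (le_of_lt (lt_of_le_of_lt h1 hΦz))
      linarith [this.1]
    rw [hkey, Complex.add_re]
    linarith
  -- choice of z0
  obtain ⟨c, hc⟩ := IsAlgClosed.exists_pow_nat_eq (-1/a : ℂ) (show 0 < k by omega)
  have hbne : (-1/a : ℂ) ≠ 0 := by simp [hg0]
  have hcne : c ≠ 0 := by
    rintro rfl
    rw [zero_pow (by omega : k ≠ 0)] at hc
    exact hbne hc.symm
  set t := min (1/2) (min (ε / (2 * (‖c‖ + 1))) (1 / (2 * ((k:ℝ) * R + 1)))) with htdef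
  have htpos : 0 < t := by
    apply lt_min (by norm_num)
    apply lt_min
    · positivity
    · positivity
  have ht1 : t ≤ 1 := le_trans (min_le_left _ _) (by norm_num)
  set z0 : ℂ := (t:ℂ) * c with hz0def
  have hz00 : z0 ≠ 0 := mul_ne_zero (by exact_mod_cast htpos.ne') hcne
  have habs0 : ‖z0‖ = t * ‖c‖ := by
    rw [hz0def, norm_mul, Complex.norm_real, Real.norm_eq_abs, abs_of_pos htpos]
  have hz0ε : ‖z0‖ < ε := by
    rw [habs0]
    have h1 : t ≤ ε / (2 * (‖c‖ + 1)) :=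
      le_trans (min_le_right _ _) (min_le_left _ _)
    have h2 : t * ‖c‖ ≤ ε / (2 * (‖c‖ + 1)) * ‖c‖ := by
      apply mul_le_mul_of_nonneg_right h1 (norm_nonneg c)
    have h3 : ε / (2 * (‖c‖ + 1)) * ‖c‖ < ε := by
      rw [div_mul_eq_mul_div, div_lt_iff₀ (by positivity)]
      nlinarith [norm_nonneg c]
    linarith
  -- value of F at z0
  have hFz0 : lfF k a z0 = ((1 / ((k:ℝ) * t ^ k) : ℝ) : ℂ) := by
    rw [lfF, hz0def, mul_pow, hc]
    have htC : ((t:ℝ):ℂ) ≠ 0 := by exact_mod_cast htpos.ne'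
    push_cast
    field_simp
  have hFz0re : (lfF k a z0).re = 1 / ((k:ℝ) * t ^ k) := by
    rw [hFz0, Complex.ofReal_re]
  have hRz0 : R < (lfF k a z0).re := by
    rw [hFz0re]
    have htk : t ^ k ≤ t := pow_le_of_le_one htpos.le ht1 (by omega)
    have h1 : t ≤ 1 / (2 * ((k:ℝ) * R + 1)) :=
      le_trans (min_le_right _ _) (min_le_right _ _)
    have h2 : t * ((k:ℝ) * R) < 1 := by
      have hkR1 : (0:ℝ) < (k:ℝ) * R := by positivity
      calc t * ((k:ℝ) * R) ≤ 1 / (2 * ((k:ℝ) * R + 1)) * ((k:ℝ) * R) := by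
            apply mul_le_mul_of_nonneg_right h1 hkR1.le
        _ < 1 := by
            rw [div_mul_eq_mul_div, div_lt_iff₀ (by positivity)]
            nlinarith
    have h3 : R < 1 / ((k:ℝ) * t) := by
      rw [lt_div_iff₀ (by positivity)]
      nlinarith
    have h4 : 1 / ((k:ℝ) * t) ≤ 1 / ((k:ℝ) * t ^ k) := by
      apply one_div_le_one_div_of_le (by positivity)
      exact mul_le_mul_of_nonneg_left htk (by positivity)
    linarith
  -- the orbit
  set W : ℕ → ℝ := fun n => (lfF k a (h^[n] z0)).re with hWdef
  have hWR : ∀ n, R < W n := by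
    intro n
    induction n with
    | zero => simpa [hWdef] using hRz0
    | succ n ih =>
      have h2 := step _ ih
      have h3 : W (n+1) = (lfF k a (h (h^[n] z0))).re := by
        simp only [hWdef, Function.iterate_succ_apply']
      rw [h3]
      exact lt_of_lt_of_le (by linarith) h2
  have hWstep : ∀ n, W n + 1/2 ≤ W (n+1) := by
    intro n
    have h2 := step _ (hWR n)
    have h3 : W (n+1) = (lfF k a (h (h^[n] z0))).re := by
      simp only [hWdef, Function.iterate_succ_apply']
    rw [h3]
    exact h2
  have hWlower : ∀ n, W 0 + n/2 ≤ W n := by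
    intro n
    induction n with
    | zero => simp
    | succ n ih =>
      have := hWstep n
      push_cast
      push_cast at ih
      linarith
  have hWmono : StrictMono W := strictMono_nat_of_lt_succ (fun n => by linarith [hWstep n])
  refine ⟨z0, hz00, hz0ε, ?_, ?_, ?_⟩
  · intro n
    have := (lf_size k hk a hg0 δ hδpos _ (hWR n)).2
    exact lt_of_lt_of_le this hδε
  · rw [Metric.tendsto_atTop]
    intro ζ hζ
    obtain ⟨N, hN⟩ := exists_nat_gt (2 * (1/(K * ζ ^ k) - W 0))
    refine ⟨N, fun n hn => ?_⟩
    have hnN : (N:ℝ) ≤ n := Nat.cast_le.mpr hn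
    have hB : 1/(K * ζ ^ k) < W n := by
      have := hWlower n
      linarith
    rw [Complex.dist_eq, sub_zero]
    exact (lf_size k hk a hg0 ζ hζ _ hB).2
  · intro m n hmn
    have : W m = W n := by
      simp only [hWdef]
      exact congrArg (fun w => (lfF k a w).re) hmn
    exact hWmono.injective this
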